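/- Let S be a set of bit positions containing all distinction bit positions of adjacent keys in a strictly increasing sequence key_0 < ... < key_n, and let Compress(k) be the subsequence of bits of k at positions in S (in increasing position order). Then for all i, j: key_i < key_j if and only if Compress(key_i) < Compress(key_j) in lexicographic order. In particular, Compress is injective on the keys and the sorted order of the compressed keys equals the sorted order of the original keys. -/

import Mathlib

/-- Lexicographic order on fixed-length bit strings (position 0 most significant). -/
def keyLt {m : ℕ} (x y : Fin m → Bool) : Prop :=
  ∃ i : Fin m, (∀ j : Fin m, j < i → x j = y j) ∧ x i < y i

/-- Distinction bit position: the least position where `x` and `y` differ. -/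
noncomputable def dbit {m : ℕ} (x y : Fin m → Bool) : ℕ :=
  sInf {i : ℕ | ∃ h : i < m, x ⟨i, h⟩ ≠ y ⟨i, h⟩}

/-- The bits of `k` at the positions of `S`, in increasing order of position. -/
noncomputable def compress {m : ℕ} (S : Finset ℕ) (k : Fin m → Bool) : List Bool :=
  (S.sort (· ≤ ·)).map (fun i => if h : i < m then k ⟨i, h⟩ else false)

section aux
variable {m : ℕ}

lemma keyLt_trans {x y z : Fin m → Bool} (h1 : keyLt x y) (h2 : keyLt y z) : keyLt x z := by
  obtain ⟨i, hi, hxi⟩ := h1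
  obtain ⟨j, hj, hyj⟩ := h2
  rcases lt_trichotomy i j with h | h | h
  · exact ⟨i, fun l hl => (hi l hl).trans (hj l (hl.trans h)), by rw [← hj i h]; exact hxi⟩
  · subst h; exact ⟨i, fun l hl => (hi l hl).trans (hj l hl), hxi.trans hyj⟩
  · exact ⟨j, fun l hl => (hi l (hl.trans h)).trans (hj l hl), by rw [hi j h]; exact hyj⟩

lemma keyLt_irrefl (x : Fin m → Bool) : ¬ keyLt x x := by
  rintro ⟨i, -, h⟩; exact lt_irrefl _ h

lemma keyLt_asymm {x y : Fin m → Bool} (h : keyLt x y) : ¬ keyLt y x :=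
  fun h' => keyLt_irrefl x (keyLt_trans h h')

lemma keyLt_trichotomy (x y : Fin m → Bool) : keyLt x y ∨ x = y ∨ keyLt y x := by
  by_cases hxy : x = y
  · exact Or.inr (Or.inl hxy)
  have hne : ∃ i : ℕ, ∃ h : i < m, x ⟨i, h⟩ ≠ y ⟨i, h⟩ := by
    by_contra h
    push_neg at h
    exact hxy (funext fun i => h i.val i.isLt)
  classical
  let d := Nat.find hne
  obtain ⟨hdm, hdne⟩ : ∃ h : d < m, x ⟨d, h⟩ ≠ y ⟨d, h⟩ := Nat.find_spec hne
  have hagree : ∀ j : Fin m, j < (⟨d, hdm⟩ : Fin m) → x j = y j := by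
    intro j hj
    have := Nat.find_min hne (m := j.val) hj
    push_neg at this
    have := this j.isLt
    simpa using this
  rcases lt_or_gt_of_ne hdne with h | h
  · exact Or.inl ⟨⟨d, hdm⟩, hagree, h⟩
  · exact Or.inr (Or.inr ⟨⟨d, hdm⟩, fun j hj => (hagree j hj).symm, h⟩)

lemma lex_append (c : List Bool) {a b : Bool} (hab : a < b) (t₁ t₂ : List Bool) :
    List.Lex (· < ·) (c ++ a :: t₁) (c ++ b :: t₂) := by
  induction c with
  | nil => exact List.Lex.rel hab
  | cons h t ih => exact List.Lex.cons ih

lemma compress_lt_of_keyLt {x y : Fin m → Bool} (S : Finset ℕ)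
    (hxy : keyLt x y) (hdS : dbit x y ∈ S) :
    List.Lex (· < ·) (compress S x) (compress S y) := by
  obtain ⟨i, hagree, hlt⟩ := hxy
  set D : Set ℕ := {i : ℕ | ∃ h : i < m, x ⟨i, h⟩ ≠ y ⟨i, h⟩} with hD
  have hiD : i.val ∈ D := ⟨i.isLt, by simpa using ne_of_lt hlt⟩
  have hne : D.Nonempty := ⟨i.val, hiD⟩
  have hmem : dbit x y ∈ D := Nat.sInf_mem hne
  obtain ⟨hdm, hdne⟩ := hmem
  set d := dbit x y with hd
  have hdi : d = i.val := by
    have hle : d ≤ i.val := Nat.sInf_le hiD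
    rcases hle.lt_or_eq with h | h
    · exact absurd (hagree ⟨d, hdm⟩ h) hdne
    · exact h
  have hxd : x ⟨d, hdm⟩ = false ∧ y ⟨d, hdm⟩ = true := by
    have : (⟨d, hdm⟩ : Fin m) = i := Fin.ext hdi
    rw [this]
    exact Bool.lt_iff.mp hlt
  have hbelow : ∀ e : ℕ, e < d → ∀ he : e < m, x ⟨e, he⟩ = y ⟨e, he⟩ := by
    intro e hed he
    have h1 : e ∉ D := fun h => absurd (Nat.sInf_le h) (not_le.mpr hed)
    have h2 : ¬ ∃ h : e < m, x ⟨e, h⟩ ≠ y ⟨e, h⟩ := h1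
    push_neg at h2
    exact h2 he
  -- split the sorted list at d
  have hdL : d ∈ S.sort (· ≤ ·) := (Finset.mem_sort _).mpr hdS
  obtain ⟨l₁, l₂, hL⟩ := List.append_of_mem hdL
  have hsorted : List.Pairwise (· < ·) (S.sort (· ≤ ·)) := (Finset.sortedLT_sort S).pairwise
  rw [hL] at hsorted
  have hl₁lt : ∀ a ∈ l₁, a < d := by
    intro a ha
    exact (List.pairwise_append.mp hsorted).2.2 a ha d List.mem_cons_self
  set f := fun i => if h : i < m then x ⟨i, h⟩ else false with hf
  set g := fun i => if h : i < m then y ⟨i, h⟩ else false with hg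
  have hmap : l₁.map f = l₁.map g := by
    apply List.map_congr_left
    intro a ha
    by_cases ham : a < m
    · simp only [hf, hg, dif_pos ham]
      exact hbelow a (hl₁lt a ha) ham
    · simp [hf, hg, ham]
  have hcx : compress S x = l₁.map g ++ false :: l₂.map f := by
    rw [compress, hL, List.map_append, List.map_cons, ← hmap]
    congr 1
    · simp [hf, dif_pos hdm, hxd.1]
  have hcy : compress S y = l₁.map g ++ true :: l₂.map g := by
    rw [compress, hL, List.map_append, List.map_cons]
    congr 1
    simp [hg, dif_pos hdm, hxd.2]
  rw [hcx, hcy]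
  exact lex_append _ (by simp [Bool.lt_iff]) _ _

end aux

/-- If `S` contains all adjacent distinction bit positions, then comparing compressed
keys is equivalent to comparing the original keys; in particular the compression is
injective on the keys. -/
theorem compress_preserves_order {m n : ℕ} (key : ℕ → Fin m → Bool)
    (hinc : ∀ k < n, keyLt (key k) (key (k + 1)))
    (S : Finset ℕ) (hSm : ∀ i ∈ S, i < m)
    (hS : ∀ k : ℕ, 1 ≤ k → k ≤ n → dbit (key (k - 1)) (key k) ∈ S) :
    (∀ i j : ℕ, i ≤ n → j ≤ n →
        (keyLt (key i) (key j) ↔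
          List.Lex (· < ·) (compress S (key i)) (compress S (key j)))) ∧
    (∀ i j : ℕ, i ≤ n → j ≤ n →
        compress S (key i) = compress S (key j) → key i = key j) := by
  have hchain : ∀ i j : ℕ, i < j → j ≤ n → keyLt (key i) (key j) := by
    intro i j hij hjn
    induction j with
    | zero => omega
    | succ j ih =>
      rcases Nat.lt_succ_iff_lt_or_eq.mp hij with h | h
      · exact keyLt_trans (ih h (by omega)) (hinc j (by omega))
      · rw [h]; exact hinc j (by omega)
  have hcchain : ∀ i j : ℕ, i < j → j ≤ n →
      List.Lex (· < ·) (compress S (key i)) (compress S (key j)) := by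
    intro i j hij hjn
    induction j with
    | zero => omega
    | succ j ih =>
      have hadj : List.Lex (· < ·) (compress S (key j)) (compress S (key (j + 1))) := by
        have := hS (j + 1) (by omega) hjn
        simpa using compress_lt_of_keyLt S (hinc j (by omega)) (by simpa using this)
      rcases Nat.lt_succ_iff_lt_or_eq.mp hij with h | h
      · exact List.lt_trans (α := Bool) (ih h (by omega)) hadj
      · rw [h]; exact hadj
  have hidx : ∀ i j : ℕ, i ≤ n → j ≤ n → keyLt (key i) (key j) → i < j := by
    intro i j hin hjn h
    rcases lt_trichotomy i j with hij | hij | hij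
    · exact hij
    · subst hij; exact absurd h (keyLt_irrefl _)
    · exact absurd h (keyLt_asymm (hchain j i hij hin))
  have hlex_asymm : ∀ l₁ l₂ : List Bool,
      List.Lex (· < ·) l₁ l₂ → ¬ List.Lex (· < ·) l₂ l₁ := fun _ _ h h' => asymm h h'
  have hiff : ∀ i j : ℕ, i ≤ n → j ≤ n →
      (keyLt (key i) (key j) ↔
        List.Lex (· < ·) (compress S (key i)) (compress S (key j))) := by
    intro i j hin hjn
    constructor
    · intro h
      exact hcchain i j (hidx i j hin hjn h) hjn
    · intro h
      rcases keyLt_trichotomy (key i) (key j) with hk | hk | hk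
      · exact hk
      · rw [hk] at h
        exact absurd h (hlex_asymm _ _ h)
      · have := hcchain j i (hidx j i hjn hin hk) hin
        exact absurd h (hlex_asymm _ _ this)
    
  refine ⟨hiff, ?_⟩
  intro i j hin hjn heq
  rcases keyLt_trichotomy (key i) (key j) with hk | hk | hk
  · have := (hiff i j hin hjn).mp hk
    rw [heq] at this
    exact absurd this (hlex_asymm _ _ this)
  · exact hk
  · have := (hiff j i hjn hin).mp hk
    rw [heq] at this
    exact absurd this (hlex_asymm _ _ this)
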